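/- Let v(t,x) := (1/√(4πt)) ∫₀^∞ (e^{−(x−y)²/(4t)} − e^{−(x+y)²/(4t)}) v₀(y) dy for t > 0, x > 0, where v₀(x) = 1 for 0 < x ≤ 1 and v₀(x) = 1/x² for x > 1. Then there exist t₀ > 0 and C > 0 such that ∂ₓv(t,x)/v(t,x) ≥ −C/t^{1/4} for all t > t₀ and all x > 0. -/

import Mathlib

open Real Filter MeasureTheory Set

noncomputable section

/-- The initial datum `v₀(x) = 1` for `0 < x ≤ 1`, `v₀(x) = 1/x²` for `x > 1`. -/
def v₀ (x : ℝ) : ℝ := if x ≤ 1 then 1 else 1 / x ^ 2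

/-- The solution of the Dirichlet heat equation on the half-line with initial datum `v₀`. -/
def vheat (t x : ℝ) : ℝ :=
  (Real.sqrt (4 * Real.pi * t))⁻¹ *
    ∫ y in Set.Ioi (0 : ℝ),
      (Real.exp (-(x - y) ^ 2 / (4 * t)) - Real.exp (-(x + y) ^ 2 / (4 * t))) * v₀ y

def Kf (t x y : ℝ) : ℝ :=
  Real.exp (-(x - y) ^ 2 / (4 * t)) - Real.exp (-(x + y) ^ 2 / (4 * t))

def Kf' (t x y : ℝ) : ℝ :=
  -(x - y) / (2 * t) * Real.exp (-(x - y) ^ 2 / (4 * t)) +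
    (x + y) / (2 * t) * Real.exp (-(x + y) ^ 2 / (4 * t))

lemma v0_pos (y : ℝ) : 0 < v₀ y := by
  unfold v₀; split_ifs with h
  · norm_num
  · have : (1:ℝ) < y := not_le.mp h
    positivity

lemma v0_le_one (y : ℝ) : v₀ y ≤ 1 := by
  unfold v₀; split_ifs with h
  · exact le_rfl
  · have h1 : (1:ℝ) < y := not_le.mp h
    rw [div_le_one (by positivity)]
    nlinarith

lemma v0_eq_of_one_lt {y : ℝ} (hy : 1 < y) : v₀ y = 1 / y ^ 2 := by
  unfold v₀; rw [if_neg (not_le.mpr hy)]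

lemma v0_meas : Measurable v₀ := by
  unfold v₀
  exact Measurable.ite (measurableSet_le measurable_id measurable_const)
    measurable_const (measurable_const.div (measurable_id.pow_const 2))

lemma int_gauss {c : ℝ} (hc : 0 < c) (a : ℝ) :
    Integrable (fun y : ℝ => Real.exp (-(y - a) ^ 2 / c)) := by
  have h : (fun y : ℝ => Real.exp (-(y - a) ^ 2 / c)) =
      fun y : ℝ => (fun z : ℝ => Real.exp (-(1/c) * z ^ 2)) (y - a) := by
    funext y; congr 1; field_simp
  rw [h]
  exact (integrable_exp_neg_mul_sq (by positivity)).comp_sub_right a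

lemma int_gauss_sub {c : ℝ} (hc : 0 < c) (x : ℝ) :
    Integrable (fun y : ℝ => Real.exp (-(x - y) ^ 2 / c)) := by
  have h : (fun y : ℝ => Real.exp (-(x - y) ^ 2 / c)) =
      fun y : ℝ => Real.exp (-(y - x) ^ 2 / c) := by
    funext y; congr 1; ring
  rw [h]; exact int_gauss hc x

lemma int_gauss_add {c : ℝ} (hc : 0 < c) (x : ℝ) :
    Integrable (fun y : ℝ => Real.exp (-(x + y) ^ 2 / c)) := by
  have h : (fun y : ℝ => Real.exp (-(x + y) ^ 2 / c)) =
      fun y : ℝ => Real.exp (-(y - (-x)) ^ 2 / c) := by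
    funext y; congr 1; ring
  rw [h]; exact int_gauss hc (-x)

lemma lemA {t : ℝ} (ht : 0 < t) (z : ℝ) :
    |z| / (2 * t) * Real.exp (-z ^ 2 / (4 * t)) ≤
      (Real.sqrt t)⁻¹ * Real.exp (-z ^ 2 / (8 * t)) := by
  have hs : 0 < Real.sqrt t := Real.sqrt_pos.mpr ht
  have hss : Real.sqrt t * Real.sqrt t = t := Real.mul_self_sqrt ht.le
  have h2 : 4 * Real.sqrt t * |z| ≤ z ^ 2 + 4 * t := by
    nlinarith [sq_nonneg (|z| - 2 * Real.sqrt t), sq_abs z]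
  have h1 : |z| ≤ 2 * Real.sqrt t * (z ^ 2 / (8 * t) + 1) := by
    have h4 : |z| * (8 * t) ≤ 2 * Real.sqrt t * (z ^ 2 / (8 * t) + 1) * (8 * t) := by
      have he : 2 * Real.sqrt t * (z ^ 2 / (8 * t) + 1) * (8 * t) =
          2 * Real.sqrt t * z ^ 2 + 16 * t * Real.sqrt t := by
        field_simp; ring
      rw [he]
      nlinarith [mul_le_mul_of_nonneg_left h2 (by positivity : (0:ℝ) ≤ 2 * Real.sqrt t)]
    exact le_of_mul_le_mul_right h4 (by positivity)
  have key : |z| * Real.exp (-z ^ 2 / (8 * t)) ≤ 2 * Real.sqrt t := by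
    have h5 : |z| ≤ 2 * Real.sqrt t * Real.exp (z ^ 2 / (8 * t)) := by
      have h6 := Real.add_one_le_exp (z ^ 2 / (8 * t))
      nlinarith [hs.le]
    have h3 : Real.exp (-z ^ 2 / (8 * t)) = (Real.exp (z ^ 2 / (8 * t)))⁻¹ := by
      rw [← Real.exp_neg]; congr 1; ring
    rw [h3, ← div_eq_mul_inv, div_le_iff₀ (Real.exp_pos _)]
    linarith
  have hexp : Real.exp (-z ^ 2 / (4 * t)) =
      Real.exp (-z ^ 2 / (8 * t)) * Real.exp (-z ^ 2 / (8 * t)) := by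
    rw [← Real.exp_add]; congr 1; ring
  have hst : Real.sqrt t / t = (Real.sqrt t)⁻¹ := by
    rw [← hss]; field_simp; rw [Real.sqrt_sq hs.le]
  calc |z| / (2 * t) * Real.exp (-z ^ 2 / (4 * t))
      = |z| * Real.exp (-z ^ 2 / (8 * t)) * Real.exp (-z ^ 2 / (8 * t)) / (2 * t) := by
        rw [hexp]; ring
    _ ≤ 2 * Real.sqrt t * Real.exp (-z ^ 2 / (8 * t)) / (2 * t) := by gcongr
    _ = Real.sqrt t / t * Real.exp (-z ^ 2 / (8 * t)) := by ring
    _ = (Real.sqrt t)⁻¹ * Real.exp (-z ^ 2 / (8 * t)) := by rw [hst]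

lemma lemB {t : ℝ} (ht : 1 ≤ t) {a b : ℝ} (h : |a - b| ≤ 1) :
    Real.exp (-a ^ 2 / (8 * t)) ≤ Real.exp 1 * Real.exp (-b ^ 2 / (16 * t)) := by
  have ht0 : (0:ℝ) < t := lt_of_lt_of_le one_pos ht
  rw [← Real.exp_add, Real.exp_le_exp]
  have hab : (a - b) ^ 2 ≤ 1 := by
    have := abs_nonneg (a - b)
    nlinarith [sq_abs (a - b)]
  have hb2 : b ^ 2 ≤ 2 * a ^ 2 + 2 := by nlinarith [sq_nonneg (2 * a - b)]
  have h1 : -a ^ 2 / (8 * t) = -(2 * a ^ 2) / (16 * t) := by ring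
  rw [h1]
  have h2 : -(2 * a ^ 2) / (16 * t) ≤ (2 - b ^ 2) / (16 * t) := by
    gcongr
    linarith
  have h3 : (2 - b ^ 2) / (16 * t) = 2 / (16 * t) + -b ^ 2 / (16 * t) := by ring
  have h4 : 2 / (16 * t) ≤ 1 := by
    rw [div_le_one (by positivity)]; linarith
  rw [h3] at h2
  linarith

lemma Kf_nonneg {t x y : ℝ} (ht : 0 < t) (hx : 0 ≤ x) (hy : 0 ≤ y) : 0 ≤ Kf t x y := by
  unfold Kf
  rw [sub_nonneg, Real.exp_le_exp]
  apply (div_le_div_iff_of_pos_right (by positivity : (0:ℝ) < 4 * t)).mpr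
  nlinarith [mul_nonneg hx hy]

lemma Kf_fac (t x y : ℝ) : Kf t x y =
    Real.exp (-(x - y) ^ 2 / (4 * t)) * (1 - Real.exp (-(x * y) / t)) := by
  unfold Kf
  rw [mul_sub, mul_one, ← Real.exp_add]
  congr 2
  by_cases h : t = 0
  · simp [h]
  · field_simp; ring

lemma contKf (t x : ℝ) : Continuous (fun y => Kf t x y) := by
  unfold Kf; fun_prop

lemma asm_mul_v0 {f : ℝ → ℝ} (hf : Continuous f) (s : Set ℝ) :
    AEStronglyMeasurable (fun y => f y * v₀ y) (volume.restrict s) :=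
  (hf.aestronglyMeasurable.mul v0_meas.aestronglyMeasurable).restrict

lemma intOn_gauss_v0 {c : ℝ} (hc : 0 < c) (x : ℝ) :
    IntegrableOn (fun y => Real.exp (-(x - y) ^ 2 / c) * v₀ y) (Ioi 0) := by
  apply Integrable.mono (int_gauss_sub hc x).integrableOn
    (asm_mul_v0 (by fun_prop) _)
  filter_upwards with y
  simp only [Real.norm_eq_abs, abs_mul, Real.abs_exp, abs_of_pos (v0_pos y)]
  nlinarith [v0_le_one y, v0_pos y, Real.exp_pos (-(x - y) ^ 2 / c)]

lemma intOn_Kv {t : ℝ} (ht : 0 < t) (x : ℝ) :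
    IntegrableOn (fun y => Kf t x y * v₀ y) (Ioi 0) := by
  have h4 : (0:ℝ) < 4 * t := by linarith
  apply Integrable.mono ((int_gauss_sub h4 x).add (int_gauss_add h4 x)).integrableOn
    (asm_mul_v0 (contKf t x) _)
  filter_upwards with y
  simp only [Pi.add_apply, Real.norm_eq_abs, abs_mul, abs_of_pos (v0_pos y)]
  have h1 : |Kf t x y| ≤ Real.exp (-(x - y) ^ 2 / (4 * t)) + Real.exp (-(x + y) ^ 2 / (4 * t)) := by
    unfold Kf
    have h := abs_add_le (Real.exp (-(x - y) ^ 2 / (4 * t))) (-Real.exp (-(x + y) ^ 2 / (4 * t)))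
    rw [abs_neg, Real.abs_exp, Real.abs_exp] at h
    rw [sub_eq_add_neg]
    exact h
  have h2 : |Kf t x y| * v₀ y ≤ |Kf t x y| * 1 :=
    mul_le_mul_of_nonneg_left (v0_le_one y) (abs_nonneg _)
  rw [abs_of_nonneg (by positivity : (0:ℝ) ≤ Real.exp (-(x - y) ^ 2 / (4 * t)) + Real.exp (-(x + y) ^ 2 / (4 * t)))]
  nlinarith

lemma hasDerivKf (t x y : ℝ) (ht : 0 < t) :
    HasDerivAt (fun x => Kf t x y * v₀ y) (Kf' t x y * v₀ y) x := by
  apply HasDerivAt.mul_const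
  have h1 : HasDerivAt (fun x : ℝ => -(x - y) ^ 2 / (4 * t))
      (-(x - y) / (2 * t)) x := by
    have := (((hasDerivAt_id x).sub_const y).pow 2).neg.div_const (4 * t)
    refine this.congr_deriv ?_
    push_cast
    simp only [id_eq]
    ring
  have h2 : HasDerivAt (fun x : ℝ => -(x + y) ^ 2 / (4 * t))
      (-(x + y) / (2 * t)) x := by
    have := (((hasDerivAt_id x).add_const y).pow 2).neg.div_const (4 * t)
    refine this.congr_deriv ?_
    push_cast
    simp only [id_eq]
    ring
  have e1 := h1.exp
  have e2 := h2.exp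
  have := e1.sub e2
  refine this.congr_deriv ?_
  unfold Kf'
  ring

lemma deriv_key {t : ℝ} (ht : 1 ≤ t) (x : ℝ) :
    IntegrableOn (fun y => Kf' t x y * v₀ y) (Ioi 0) volume ∧
      HasDerivAt (fun x => ∫ y in Ioi (0:ℝ), Kf t x y * v₀ y)
        (∫ y in Ioi (0:ℝ), Kf' t x y * v₀ y) x := by
  have ht0 : (0:ℝ) < t := lt_of_lt_of_le one_pos ht
  have h16 : (0:ℝ) < 16 * t := by linarith
  have hs : 0 < Real.sqrt t := Real.sqrt_pos.mpr ht0
  set bound : ℝ → ℝ := fun y =>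
    Real.exp 1 * (Real.sqrt t)⁻¹ *
      (Real.exp (-(x - y) ^ 2 / (16 * t)) + Real.exp (-(x + y) ^ 2 / (16 * t))) with hbd
  have key := hasDerivAt_integral_of_dominated_loc_of_deriv_le
    (F := fun x y => Kf t x y * v₀ y) (F' := fun x y => Kf' t x y * v₀ y)
    (x₀ := x) (bound := bound) (μ := volume.restrict (Ioi 0)) (s := Metric.ball x 1) (Metric.ball_mem_nhds x one_pos)
    ?_ ?_ ?_ ?_ ?_ ?_
  · exact key
  · exact Eventually.of_forall fun x' => asm_mul_v0 (contKf t x') _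
  · exact intOn_Kv ht0 x
  · exact asm_mul_v0 (by unfold Kf'; fun_prop) _
  · filter_upwards with y
    intro x' hx'
    have hdist : |x' - x| ≤ 1 := by
      rw [Metric.mem_ball, Real.dist_eq] at hx'
      exact hx'.le
    have hv0 : ‖Kf' t x' y * v₀ y‖ ≤ |Kf' t x' y| := by
      rw [Real.norm_eq_abs, abs_mul, abs_of_pos (v0_pos y)]
      nlinarith [v0_le_one y, abs_nonneg (Kf' t x' y), v0_pos y]
    apply hv0.trans
    have hA1 := lemA ht0 (x' - y)
    have hA2 := lemA ht0 (x' + y)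
    have hB1 : Real.exp (-(x' - y) ^ 2 / (8 * t)) ≤
        Real.exp 1 * Real.exp (-(x - y) ^ 2 / (16 * t)) :=
      lemB ht (by rw [show x' - y - (x - y) = x' - x by ring]; exact hdist)
    have hB2 : Real.exp (-(x' + y) ^ 2 / (8 * t)) ≤
        Real.exp 1 * Real.exp (-(x + y) ^ 2 / (16 * t)) :=
      lemB ht (by rw [show x' + y - (x + y) = x' - x by ring]; exact hdist)
    have htri : |Kf' t x' y| ≤
        |x' - y| / (2 * t) * Real.exp (-(x' - y) ^ 2 / (4 * t)) +
          |x' + y| / (2 * t) * Real.exp (-(x' + y) ^ 2 / (4 * t)) := by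
      unfold Kf'
      have := abs_add_le (-(x' - y) / (2 * t) * Real.exp (-(x' - y) ^ 2 / (4 * t)))
        ((x' + y) / (2 * t) * Real.exp (-(x' + y) ^ 2 / (4 * t)))
      rw [abs_mul, abs_mul, abs_div, abs_div, abs_neg, abs_of_pos (Real.exp_pos _),
        abs_of_pos (Real.exp_pos _), abs_of_pos (by positivity : (0:ℝ) < 2 * t)] at this
      exact this
    rw [hbd]
    have h1 : |x' - y| / (2 * t) * Real.exp (-(x' - y) ^ 2 / (4 * t)) ≤
        (Real.sqrt t)⁻¹ * (Real.exp 1 * Real.exp (-(x - y) ^ 2 / (16 * t))) := by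
      apply hA1.trans
      exact mul_le_mul_of_nonneg_left hB1 (by positivity)
    have h2 : |x' + y| / (2 * t) * Real.exp (-(x' + y) ^ 2 / (4 * t)) ≤
        (Real.sqrt t)⁻¹ * (Real.exp 1 * Real.exp (-(x + y) ^ 2 / (16 * t))) := by
      apply hA2.trans
      exact mul_le_mul_of_nonneg_left hB2 (by positivity)
    calc |Kf' t x' y| ≤ _ := htri
      _ ≤ (Real.sqrt t)⁻¹ * (Real.exp 1 * Real.exp (-(x - y) ^ 2 / (16 * t))) +
          (Real.sqrt t)⁻¹ * (Real.exp 1 * Real.exp (-(x + y) ^ 2 / (16 * t))) := by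
        exact add_le_add h1 h2
      _ = Real.exp 1 * (Real.sqrt t)⁻¹ *
          (Real.exp (-(x - y) ^ 2 / (16 * t)) + Real.exp (-(x + y) ^ 2 / (16 * t))) := by ring
  · apply Integrable.integrableOn
    exact (((int_gauss_sub h16 x).add (int_gauss_add h16 x)).const_mul _)
  · filter_upwards with y
    intro x' _
    exact hasDerivKf t x' y ht0

lemma intOn_K'v {t : ℝ} (ht : 1 ≤ t) (x : ℝ) :
    IntegrableOn (fun y => Kf' t x y * v₀ y) (Ioi 0) volume := (deriv_key ht x).1

lemma Vpos {t x : ℝ} (ht : 0 < t) (hx : 0 < x) :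
    0 < ∫ y in Ioi (0:ℝ), Kf t x y * v₀ y := by
  have hpos : ∀ y ∈ Ioi (0:ℝ), 0 < Kf t x y * v₀ y := by
    intro y hy
    have hy0 : 0 < y := hy
    have hK : 0 < Kf t x y := by
      unfold Kf
      rw [sub_pos, Real.exp_lt_exp]
      apply (div_lt_div_iff_of_pos_right (by positivity : (0:ℝ) < 4 * t)).mpr
      nlinarith [mul_pos hx hy0]
    exact mul_pos hK (v0_pos y)
  rw [setIntegral_pos_iff_support_of_nonneg_ae ?hn (intOn_Kv ht x)]
  case hn =>
    rw [EventuallyLE, ae_restrict_iff' measurableSet_Ioi]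
    exact ae_of_all _ fun y hy => (hpos y hy).le
  have hsub : Ioi (0:ℝ) ⊆ Function.support (fun y => Kf t x y * v₀ y) ∩ Ioi 0 :=
    fun y hy => ⟨(hpos y hy).ne', hy⟩
  calc (0:ENNReal) < volume (Ioi (0:ℝ)) := by rw [Real.volume_Ioi]; exact ENNReal.zero_lt_top
    _ ≤ _ := measure_mono hsub

lemma expbound {t x : ℝ} (ht : 0 < t) (hx : 0 < x) :
    Real.exp (-x ^ 2 / (32 * t)) ≤ 2 ^ 28 * t ^ 4 / x ^ 8 := by
  set u : ℝ := x ^ 2 / (32 * t) with hu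
  have hu0 : 0 < u := by positivity
  have h1 : u / 4 ≤ Real.exp (u / 4) := by
    have := Real.add_one_le_exp (u / 4); linarith
  have h2 : Real.exp u = Real.exp (u / 4) ^ 4 := by
    rw [← Real.exp_nat_mul]; congr 1; push_cast; ring
  have h3 : (u / 4) ^ 4 ≤ Real.exp u := by
    rw [h2]; exact pow_le_pow_left₀ (by positivity) h1 4
  have h4 : (u / 4) ^ 4 = x ^ 8 / (2 ^ 28 * t ^ 4) := by
    rw [hu]; rw [div_div]; rw [div_pow]
    norm_num; ring
  have h5 : Real.exp (-x ^ 2 / (32 * t)) = (Real.exp u)⁻¹ := by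
    rw [← Real.exp_neg]; congr 1; rw [hu]; ring
  rw [h5]
  have h6 : (Real.exp u)⁻¹ ≤ ((u / 4) ^ 4)⁻¹ :=
    inv_anti₀ (by positivity) h3
  apply h6.trans
  rw [h4, ← one_div, one_div_div]


lemma hA_bound {t x : ℝ} (ht0 : 0 < t) (hx : 0 < x) :
    (∫ y in Ioc (0:ℝ) (x/2), Real.exp (-(x - y)^2/(8*t)) * v₀ y) ≤
        x/2 * Real.exp (-x^2/(32*t)) := by
  have h8t : (0:ℝ) < 8*t := by linarith
  have hIA := (intOn_gauss_v0 h8t x).mono_set (Ioc_subset_Ioi_self : Ioc (0:ℝ) (x/2) ⊆ Ioi 0)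
  have hconst : IntegrableOn (fun _ : ℝ => Real.exp (-x^2/(32*t))) (Ioc 0 (x/2)) := by
    apply integrableOn_const ?_
    rw [Real.volume_Ioc]; exact ENNReal.ofReal_ne_top
  have hmono := setIntegral_mono_on hIA hconst measurableSet_Ioc ?_
  · rw [setIntegral_const, Real.volume_real_Ioc_of_le (by linarith : (0:ℝ) ≤ x/2), smul_eq_mul] at hmono
    have he : (x/2 - 0 : ℝ) = x/2 := by ring
    rw [he] at hmono
    exact hmono
  · intro y hy
    obtain ⟨hy0, hyx⟩ := hy
    have hsq : x^2/4 ≤ (x - y)^2 := by nlinarith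
    have hexp : Real.exp (-(x - y)^2/(8*t)) ≤ Real.exp (-x^2/(32*t)) := by
      rw [Real.exp_le_exp, div_le_div_iff₀ (by positivity) (by positivity)]
      nlinarith [mul_le_mul_of_nonneg_right hsq ht0.le]
    calc Real.exp (-(x - y)^2/(8*t)) * v₀ y
        ≤ Real.exp (-(x - y)^2/(8*t)) * 1 :=
          mul_le_mul_of_nonneg_left (v0_le_one y) (Real.exp_pos _).le
      _ = Real.exp (-(x - y)^2/(8*t)) := mul_one _
      _ ≤ Real.exp (-x^2/(32*t)) := hexp

-- Case 1 pointwise bound, integrated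
lemma case1_bound {t x : ℝ} (ht1 : 1 ≤ t) (hx : 0 < x) :
    -(x/(2*t)) * (∫ y in Ioi (0:ℝ), Kf t x y * v₀ y) ≤
      ∫ y in Ioi (0:ℝ), Kf' t x y * v₀ y := by
  have ht0 : (0:ℝ) < t := lt_of_lt_of_le one_pos ht1
  have hpt : ∀ y ∈ Ioi (0:ℝ), -(x/(2*t)) * (Kf t x y * v₀ y) ≤ Kf' t x y * v₀ y := by
    intro y hy
    have hy0 : 0 < y := hy
    have hkey2 : Kf' t x y * v₀ y =
        y/(2*t) * ((Real.exp (-(x - y) ^ 2 / (4 * t)) +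
          Real.exp (-(x + y) ^ 2 / (4 * t))) * v₀ y) -
          x/(2*t) * (Kf t x y * v₀ y) := by
      unfold Kf Kf'; ring
    have h0 : 0 ≤ y/(2*t) * ((Real.exp (-(x - y) ^ 2 / (4 * t)) +
        Real.exp (-(x + y) ^ 2 / (4 * t))) * v₀ y) :=
      mul_nonneg (by positivity) (mul_nonneg (by positivity) (v0_pos y).le)
    have h1 : -(x/(2*t)) * (Kf t x y * v₀ y) =
        Kf' t x y * v₀ y - (Kf' t x y * v₀ y + x/(2*t) * (Kf t x y * v₀ y)) + 0 := by ring
    nlinarith [hkey2, h0]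
  have hmono := setIntegral_mono_on ((intOn_Kv ht0 x).const_mul (-(x/(2*t)))) (intOn_K'v ht1 x)
    measurableSet_Ioi hpt
  rw [integral_const_mul] at hmono
  exact hmono

-- D lower bound, case 2
lemma hD_low {t x : ℝ} (ht1 : 1 ≤ t) (hx : 0 < x) :
    -((Real.sqrt t)⁻¹ * ∫ y in Ioi (0:ℝ), Real.exp (-(x - y)^2/(8*t)) * v₀ y) ≤
      ∫ y in Ioi (0:ℝ), Kf' t x y * v₀ y := by
  have ht0 : (0:ℝ) < t := lt_of_lt_of_le one_pos ht1
  have h8t : (0:ℝ) < 8*t := by linarith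
  have hpt : ∀ y ∈ Ioi (0:ℝ),
      -(Real.sqrt t)⁻¹ * (Real.exp (-(x - y)^2/(8*t)) * v₀ y) ≤ Kf' t x y * v₀ y := by
    intro y hy
    have hy0 : 0 < y := hy
    have hA := lemA ht0 (x - y)
    have e1p := (Real.exp_pos (-(x - y)^2/(4*t))).le
    have hterm2 : 0 ≤ (x + y)/(2*t) * Real.exp (-(x + y)^2/(4*t)) := by positivity
    have habs : (x - y)/(2*t) * Real.exp (-(x - y)^2/(4*t)) ≤
        |x - y|/(2*t) * Real.exp (-(x - y)^2/(4*t)) := by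
      apply mul_le_mul_of_nonneg_right _ e1p
      gcongr
      exact le_abs_self _
    have h1 : -(Real.sqrt t)⁻¹ * Real.exp (-(x - y)^2/(8*t)) ≤ Kf' t x y := by
      unfold Kf'
      have hA' : |x - y| / (2*t) * Real.exp (-(x - y)^2/(4*t)) ≤
          (Real.sqrt t)⁻¹ * Real.exp (-(x - y)^2/(8*t)) := by
        convert hA using 3 <;> ring
      ring_nf at hA' habs hterm2 ⊢
      linarith
    have h2 := mul_le_mul_of_nonneg_right h1 (v0_pos y).le
    calc -(Real.sqrt t)⁻¹ * (Real.exp (-(x - y)^2/(8*t)) * v₀ y)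
        = (-(Real.sqrt t)⁻¹ * Real.exp (-(x - y)^2/(8*t))) * v₀ y := by ring
      _ ≤ Kf' t x y * v₀ y := h2
  have hmono := setIntegral_mono_on ((intOn_gauss_v0 h8t x).const_mul (-(Real.sqrt t)⁻¹))
    (intOn_K'v ht1 x) measurableSet_Ioi hpt
  rw [integral_const_mul] at hmono
  calc -((Real.sqrt t)⁻¹ * ∫ y in Ioi (0:ℝ), Real.exp (-(x - y)^2/(8*t)) * v₀ y)
      = -(Real.sqrt t)⁻¹ * ∫ y in Ioi (0:ℝ), Real.exp (-(x - y)^2/(8*t)) * v₀ y := by ring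
    _ ≤ _ := hmono

lemma hB_bound {t x : ℝ} (ht0 : 0 < t) (hx2 : 2 < x) :
    (∫ y in Ioi (x/2), Real.exp (-(x - y)^2/(8*t)) * v₀ y) ≤
      4/x^2 * (6 * Real.sqrt t) := by
  have h8t : (0:ℝ) < 8*t := by linarith
  have hx : (0:ℝ) < x := by linarith
  have hx20 : (0:ℝ) ≤ x/2 := by linarith
  have hIB := (intOn_gauss_v0 h8t x).mono_set (Ioi_subset_Ioi hx20)
  have hint2 : IntegrableOn (fun y => 4/x^2 * Real.exp (-(x - y)^2/(8*t))) (Ioi (x/2)) :=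
    ((int_gauss_sub h8t x).const_mul _).integrableOn
  have hmono := setIntegral_mono_on hIB hint2 measurableSet_Ioi ?_
  · rw [integral_const_mul] at hmono
    have hle := setIntegral_le_integral (s := Ioi (x/2)) (int_gauss_sub h8t x)
      (ae_of_all _ fun y => (Real.exp_pos _).le)
    have hgauss : ∫ y : ℝ, Real.exp (-(x - y)^2/(8*t)) = Real.sqrt (Real.pi * (8*t)) := by
      have hrw : (fun y : ℝ => Real.exp (-(x - y)^2/(8*t))) =
          fun y : ℝ => (fun z : ℝ => Real.exp (-(8*t)⁻¹ * z^2)) (y - x) := by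
        funext y; congr 1; field_simp; ring
      rw [hrw, integral_sub_right_eq_self (fun z : ℝ => Real.exp (-(8*t)⁻¹ * z^2)) x,
        integral_gaussian]
      congr 1
      field_simp
    have hsix : Real.sqrt (Real.pi * (8*t)) ≤ 6 * Real.sqrt t := by
      have h36 : Real.pi * (8*t) ≤ 36 * t := by nlinarith [Real.pi_le_four, ht0]
      calc Real.sqrt (Real.pi * (8*t)) ≤ Real.sqrt (36*t) := Real.sqrt_le_sqrt h36
        _ = 6 * Real.sqrt t := by
          rw [show (36:ℝ)*t = 6^2*t by norm_num,
            Real.sqrt_mul (by positivity : (0:ℝ) ≤ 6^2) t,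
            Real.sqrt_sq (by norm_num : (0:ℝ) ≤ 6)]
    have h4x : (0:ℝ) ≤ 4/x^2 := by positivity
    calc (∫ y in Ioi (x/2), Real.exp (-(x - y)^2/(8*t)) * v₀ y)
        ≤ 4/x^2 * ∫ y in Ioi (x/2), Real.exp (-(x - y)^2/(8*t)) := hmono
      _ ≤ 4/x^2 * ∫ y : ℝ, Real.exp (-(x - y)^2/(8*t)) :=
          mul_le_mul_of_nonneg_left hle h4x
      _ = 4/x^2 * Real.sqrt (Real.pi * (8*t)) := by rw [hgauss]
      _ ≤ 4/x^2 * (6 * Real.sqrt t) := mul_le_mul_of_nonneg_left hsix h4x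
  · intro y hy
    have hyx : x/2 < y := hy
    have hy1 : 1 < y := lt_trans (by linarith : (1:ℝ) < x/2) hyx
    have hvle : v₀ y ≤ 4/x^2 := by
      rw [v0_eq_of_one_lt hy1, div_le_div_iff₀ (by positivity) (by positivity)]
      nlinarith
    calc Real.exp (-(x - y)^2/(8*t)) * v₀ y
        ≤ Real.exp (-(x - y)^2/(8*t)) * (4/x^2) :=
          mul_le_mul_of_nonneg_left hvle (Real.exp_pos _).le
      _ = 4/x^2 * Real.exp (-(x - y)^2/(8*t)) := by ring

lemma hV_low {t x : ℝ} (ht0 : 0 < t) (hx1 : 1 < x) (hsx : Real.sqrt t ≤ x)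
    (htxx : t ≤ x * x) :
    Real.sqrt t * (1/(24*x^2)) ≤ ∫ y in Ioi (0:ℝ), Kf t x y * v₀ y := by
  have hx : (0:ℝ) < x := by linarith
  have hs0 : 0 < Real.sqrt t := Real.sqrt_pos.mpr ht0
  have hss : Real.sqrt t * Real.sqrt t = t := Real.mul_self_sqrt ht0.le
  have hsub : Ioc x (x + Real.sqrt t) ⊆ Ioi (0:ℝ) := fun y hy => lt_trans hx hy.1
  have hmono1 : (∫ y in Ioc x (x + Real.sqrt t), Kf t x y * v₀ y) ≤
      ∫ y in Ioi (0:ℝ), Kf t x y * v₀ y := by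
    apply setIntegral_mono_set (intOn_Kv ht0 x) ?_ (HasSubset.Subset.eventuallyLE hsub)
    rw [EventuallyLE, ae_restrict_iff' measurableSet_Ioi]
    exact ae_of_all _ fun y hy =>
      mul_nonneg (Kf_nonneg ht0 hx.le (le_of_lt hy)) (v0_pos y).le
  have hconst : IntegrableOn (fun _ : ℝ => 1/(24*x^2)) (Ioc x (x + Real.sqrt t)) := by
    apply integrableOn_const ?_
    rw [Real.volume_Ioc]; exact ENNReal.ofReal_ne_top
  have hmono2 := setIntegral_mono_on hconst ((intOn_Kv ht0 x).mono_set hsub)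
    measurableSet_Ioc ?_
  · rw [setIntegral_const, Real.volume_real_Ioc_of_le (by linarith : x ≤ x + Real.sqrt t), smul_eq_mul] at hmono2
    have he : (x + Real.sqrt t - x : ℝ) = Real.sqrt t := by ring
    rw [he] at hmono2
    exact le_trans hmono2 hmono1
  · intro y hy
    obtain ⟨hy1, hy2⟩ := hy
    have hyx2 : y ≤ 2*x := by linarith
    have hy1' : 1 < y := lt_trans hx1 hy1
    have hE1 : Real.exp (-1 : ℝ) ≤ Real.exp (-(x - y)^2/(4*t)) := by
      rw [Real.exp_le_exp, le_div_iff₀ (by positivity : (0:ℝ) < 4*t)]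
      nlinarith [hss]
    have hE1' : (1:ℝ)/3 ≤ Real.exp (-(x - y)^2/(4*t)) := by
      refine le_trans ?_ hE1
      rw [Real.exp_neg, one_div]
      exact inv_anti₀ (Real.exp_pos 1) (by nlinarith [Real.exp_one_lt_d9])
    have hxy : t ≤ x*y := by nlinarith
    have hfac : (1:ℝ)/2 ≤ 1 - Real.exp (-(x*y)/t) := by
      have harg : -(x*y)/t ≤ -1 := by
        rw [div_le_iff₀ ht0]; linarith
      have h1 := Real.exp_le_exp.mpr harg
      have he2 : Real.exp (-1:ℝ) ≤ 1/2 := by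
        rw [Real.exp_neg]
        have := inv_anti₀ (by norm_num : (0:ℝ) < 2)
          (by nlinarith [Real.exp_one_gt_d9] : (2:ℝ) ≤ Real.exp 1)
        simpa using this
      linarith
    have hvlow : 1/(4*x^2) ≤ v₀ y := by
      rw [v0_eq_of_one_lt hy1', div_le_div_iff₀ (by positivity) (by positivity)]
      nlinarith
    rw [Kf_fac]
    have hprod1 : (1:ℝ)/3 * (1/2) ≤
        Real.exp (-(x - y)^2/(4*t)) * (1 - Real.exp (-(x*y)/t)) :=
      mul_le_mul hE1' hfac (by norm_num) (Real.exp_pos _).le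
    have hprod2 : ((1:ℝ)/3 * (1/2)) * (1/(4*x^2)) ≤
        (Real.exp (-(x - y)^2/(4*t)) * (1 - Real.exp (-(x*y)/t))) * v₀ y :=
      mul_le_mul hprod1 hvlow (by positivity) (le_trans (by norm_num) hprod1)
    calc (1:ℝ)/(24*x^2) = ((1:ℝ)/3 * (1/2)) * (1/(4*x^2)) := by ring
      _ ≤ _ := hprod2

lemma final_numeric {t x : ℝ} (ht : 101 < t) (hPx : t ^ ((3:ℝ)/4) < x) :
    (Real.sqrt t)⁻¹ * (x/2 * Real.exp (-x^2/(32*t)) + 4/x^2 * (6 * Real.sqrt t)) ≤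
      2^40 / t ^ ((1:ℝ)/4) * (Real.sqrt t * (1/(24*x^2))) := by
  have ht0 : (0:ℝ) < t := by linarith
  have ht1 : (1:ℝ) ≤ t := by linarith
  set Q := t ^ ((1:ℝ)/4) with hQdef
  set P := t ^ ((3:ℝ)/4) with hPdef
  set s := Real.sqrt t with hsdef
  have hQ0 : 0 < Q := Real.rpow_pos_of_pos ht0 _
  have hP0 : 0 < P := Real.rpow_pos_of_pos ht0 _
  have hs0 : 0 < s := Real.sqrt_pos.mpr ht0
  have hss : s * s = t := Real.mul_self_sqrt ht0.le
  have hsrp : s = t ^ ((1:ℝ)/2) := Real.sqrt_eq_rpow t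
  have hQs : Q ≤ s := by
    rw [hsrp, hQdef]; exact Real.rpow_le_rpow_of_exponent_le ht1 (by norm_num)
  have hsP : s ≤ P := by
    rw [hsrp, hPdef]; exact Real.rpow_le_rpow_of_exponent_le ht1 (by norm_num)
  have hP5 : P ^ 5 = t ^ 3 * P := by
    rw [hPdef, ← Real.rpow_natCast (t ^ ((3:ℝ)/4)) 5, ← Real.rpow_mul ht0.le,
      ← Real.rpow_natCast t 3, ← Real.rpow_add ht0]
    norm_num
  have hx : (0:ℝ) < x := lt_trans hP0 hPx
  have hE := expbound ht0 hx
  have hterm2 : s⁻¹ * (4/x^2 * (6*s)) = 24/x^2 := by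
    field_simp
    ring
  have ht2' : 24/x^2 ≤ 2^39/Q * (s * (1/(24*x^2))) := by
    have hrhs : 2^39/Q * (s * (1/(24*x^2))) = (2^39*s)/(24*Q*x^2) := by
      field_simp
    rw [hrhs, div_le_div_iff₀ (by positivity) (by positivity)]
    nlinarith [hQs, sq_nonneg x, mul_pos hQ0 (mul_pos hx hx)]
  have ht1' : s⁻¹ * (x/2 * Real.exp (-x^2/(32*t))) ≤ 2^39/Q * (s * (1/(24*x^2))) := by
    have hrhs : 2^39/Q * (s * (1/(24*x^2))) = (2^39*s)/(24*Q*x^2) := by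
      field_simp
    have hlhs : s⁻¹ * (x/2 * Real.exp (-x^2/(32*t))) =
        (x * Real.exp (-x^2/(32*t)))/(2*s) := by
      field_simp
    rw [hrhs, hlhs, div_le_div_iff₀ (by positivity) (by positivity)]
    have hss2 : (2:ℝ)^39*s*(2*s) = 2^40*t := by
      rw [show (2:ℝ)^39*s*(2*s) = 2^40*(s*s) by ring, hss]
    have c1 : x * Real.exp (-x^2/(32*t))*(24*Q*x^2) =
        24*Q*x^3* Real.exp (-x^2/(32*t)) := by ring
    rw [hss2, c1]
    have c2 : 24*Q*x^3*Real.exp (-x^2/(32*t)) ≤ 24*Q*x^3*(2^28*t^4/x^8) :=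
      mul_le_mul_of_nonneg_left hE (by positivity)
    have c3 : 24*Q*x^3*((2:ℝ)^28*t^4/x^8) = 24*2^28*Q*t^4/x^5 := by
      field_simp
    have c4 : 24*(2:ℝ)^28*Q*t^4/x^5 ≤ 24*2^28*Q*t^4/P^5 := by
      gcongr
    have c5 : 24*(2:ℝ)^28*Q*t^4/P^5 = 24*2^28*(Q/P)*t := by
      rw [hP5]; field_simp
    have c6 : Q/P ≤ 1 := (div_le_one hP0).mpr (hQs.trans hsP)
    have c7 : 24*(2:ℝ)^28*(Q/P)*t ≤ 2^40*t := by
      nlinarith [ht0, c6, div_nonneg hQ0.le hP0.le]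
    calc 24*Q*x^3*Real.exp (-x^2/(32*t)) ≤ 24*2^28*Q*t^4/x^5 := by
          rw [← c3]; exact c2
      _ ≤ 24*2^28*Q*t^4/P^5 := c4
      _ = 24*2^28*(Q/P)*t := c5
      _ ≤ 2^40*t := c7
  calc s⁻¹ * (x/2 * Real.exp (-x^2/(32*t)) + 4/x^2*(6*s))
      = s⁻¹*(x/2 * Real.exp (-x^2/(32*t))) + s⁻¹*(4/x^2*(6*s)) := by ring
    _ = s⁻¹*(x/2 * Real.exp (-x^2/(32*t))) + 24/x^2 := by rw [hterm2]
    _ ≤ 2^39/Q*(s*(1/(24*x^2))) + 2^39/Q*(s*(1/(24*x^2))) := add_le_add ht1' ht2'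
    _ = 2^40/Q*(s*(1/(24*x^2))) := by ring

lemma hW_bound {t x : ℝ} (ht0 : 0 < t) (hx2 : 2 < x) :
    (∫ y in Ioi (0:ℝ), Real.exp (-(x - y)^2/(8*t)) * v₀ y) ≤
      x/2 * Real.exp (-x^2/(32*t)) + 4/x^2 * (6 * Real.sqrt t) := by
  have h8t : (0:ℝ) < 8*t := by linarith
  have hx20 : (0:ℝ) ≤ x/2 := by linarith
  have hIA := (intOn_gauss_v0 h8t x).mono_set
    (Ioc_subset_Ioi_self : Ioc (0:ℝ) (x/2) ⊆ Ioi 0)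
  have hIB := (intOn_gauss_v0 h8t x).mono_set (Ioi_subset_Ioi hx20)
  have hsplit : (∫ y in Ioi (0:ℝ), Real.exp (-(x - y)^2/(8*t)) * v₀ y) =
      (∫ y in Ioc (0:ℝ) (x/2), Real.exp (-(x - y)^2/(8*t)) * v₀ y) +
      (∫ y in Ioi (x/2), Real.exp (-(x - y)^2/(8*t)) * v₀ y) := by
    rw [← Ioc_union_Ioi_eq_Ioi hx20,
      setIntegral_union (Ioc_disjoint_Ioi le_rfl) measurableSet_Ioi hIA hIB]
  rw [hsplit]
  exact add_le_add (hA_bound ht0 (by linarith)) (hB_bound ht0 hx2)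

/-- Lemma 5.3: logarithmic-derivative lower bound for `v`. -/
theorem vheat_log_deriv_bound :
    ∃ t₀ C : ℝ, 0 < t₀ ∧ 0 < C ∧
      ∀ t x : ℝ, t₀ < t → 0 < x →
        -(C / t ^ ((1 : ℝ) / 4)) ≤ deriv (fun y => vheat t y) x / vheat t x := by
  refine ⟨101, 2 ^ 40, by norm_num, by positivity, ?_⟩
  intro t x ht hx
  have ht0 : (0:ℝ) < t := by linarith
  have ht1 : (1:ℝ) ≤ t := by linarith
  have hV : 0 < ∫ y in Ioi (0:ℝ), Kf t x y * v₀ y := Vpos ht0 hx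
  have hDK := deriv_key ht1 x
  have hc0 : 0 < (Real.sqrt (4 * Real.pi * t))⁻¹ := by
    have hpi := Real.pi_pos
    positivity
  have hDer : HasDerivAt (fun x => vheat t x)
      ((Real.sqrt (4 * Real.pi * t))⁻¹ * ∫ y in Ioi (0:ℝ), Kf' t x y * v₀ y) x :=
    hDK.2.const_mul ((Real.sqrt (4 * Real.pi * t))⁻¹)
  have hderiv : deriv (fun y => vheat t y) x =
      (Real.sqrt (4 * Real.pi * t))⁻¹ * ∫ y in Ioi (0:ℝ), Kf' t x y * v₀ y :=
    hDer.deriv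
  have hval : vheat t x =
      (Real.sqrt (4 * Real.pi * t))⁻¹ * ∫ y in Ioi (0:ℝ), Kf t x y * v₀ y := rfl
  rw [hderiv, hval, mul_div_mul_left _ _ (ne_of_gt hc0), le_div_iff₀ hV]
  have hQ0 : 0 < t ^ ((1:ℝ)/4) := Real.rpow_pos_of_pos ht0 _
  have hP0 : 0 < t ^ ((3:ℝ)/4) := Real.rpow_pos_of_pos ht0 _
  have hQP : t ^ ((1:ℝ)/4) * t ^ ((3:ℝ)/4) = t := by
    rw [← Real.rpow_add ht0]; norm_num
  by_cases hxP : x ≤ t ^ ((3:ℝ)/4)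
  · have h1 := case1_bound ht1 hx
    have hxQ : x/(2*t) ≤ 2^40 / t ^ ((1:ℝ)/4) := by
      rw [div_le_div_iff₀ (by positivity) hQ0]
      nlinarith [mul_le_mul_of_nonneg_right hxP hQ0.le, ht0]
    have h2 := mul_le_mul_of_nonneg_right (neg_le_neg hxQ) hV.le
    linarith [h1, h2]
  · have hPx : t ^ ((3:ℝ)/4) < x := not_le.mp hxP
    have hs0 : 0 < Real.sqrt t := Real.sqrt_pos.mpr ht0
    have hss : Real.sqrt t * Real.sqrt t = t := Real.mul_self_sqrt ht0.le
    have hsP : Real.sqrt t ≤ t ^ ((3:ℝ)/4) := by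
      rw [Real.sqrt_eq_rpow]
      exact Real.rpow_le_rpow_of_exponent_le ht1 (by norm_num)
    have h1P : (1:ℝ) ≤ t ^ ((3:ℝ)/4) := Real.one_le_rpow ht1 (by norm_num)
    have hx1 : 1 < x := lt_of_le_of_lt h1P hPx
    have hs2 : 2 < Real.sqrt t := by nlinarith
    have hx2 : 2 < x := lt_trans (lt_of_lt_of_le hs2 hsP) hPx
    have hsx : Real.sqrt t ≤ x := le_trans hsP hPx.le
    have htxx : t ≤ x * x := by nlinarith
    have hDlow := hD_low ht1 hx
    have hW := hW_bound ht0 hx2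
    have hVl := hV_low ht0 hx1 hsx htxx
    have hfin := final_numeric ht hPx
    have hsinv : (0:ℝ) ≤ (Real.sqrt t)⁻¹ := by positivity
    have h2 : (Real.sqrt t)⁻¹ * (∫ y in Ioi (0:ℝ), Real.exp (-(x - y)^2/(8*t)) * v₀ y) ≤
        2^40 / t ^ ((1:ℝ)/4) * ∫ y in Ioi (0:ℝ), Kf t x y * v₀ y :=
      le_trans (mul_le_mul_of_nonneg_left hW hsinv)
        (le_trans hfin (mul_le_mul_of_nonneg_left hVl (by positivity)))
    linarith [hDlow, h2]
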